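/- Let E > 0 and ε > 0 be real numbers, and let (a_r) and (b_r) be sequences of real numbers (indexed by r ∈ ℕ) satisfying: a₀ ≤ ε/(4√E) + ((2+√2)/4)·√E, b₀ ≤ ε/4 + ((2+√2)/4)·E, and for all r ∈ ℕ, a_{r+1} ≤ ε/(4√E) + (1/4)·(a_r + b_r/√E) and b_{r+1} ≤ ε/4 + (1/4)·(√E·a_r + b_r). Then for all r ∈ ℕ, a_r ≤ ε/(2√E) + 2^(−r)·√E and b_r ≤ ε/2 + 2^(−r)·E. -/
import Mathlib


/-- Inductive error bound for the iterative Gaussian moment extraction algorithm: if the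
mean errors `a r` and covariance errors `b r` satisfy the stated initial and recursive
inequalities, then `a r ≤ ε/(2√E) + 2^(−r)·√E` and `b r ≤ ε/2 + 2^(−r)·E` for all `r`. -/
theorem iterative_error_bound (E ε : ℝ) (hE : 0 < E) (hε : 0 < ε) (a b : ℕ → ℝ)
    (ha0 : a 0 ≤ ε / (4 * Real.sqrt E) + ((2 + Real.sqrt 2) / 4) * Real.sqrt E)
    (hb0 : b 0 ≤ ε / 4 + ((2 + Real.sqrt 2) / 4) * E)
    (ha : ∀ r : ℕ, a (r + 1) ≤ ε / (4 * Real.sqrt E) + (1 / 4) * (a r + b r / Real.sqrt E))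
    (hb : ∀ r : ℕ, b (r + 1) ≤ ε / 4 + (1 / 4) * (Real.sqrt E * a r + b r)) :
    ∀ r : ℕ, a r ≤ ε / (2 * Real.sqrt E) + (2 : ℝ) ^ (-(r : ℤ)) * Real.sqrt E ∧
             b r ≤ ε / 2 + (2 : ℝ) ^ (-(r : ℤ)) * E := by
  have hs : 0 < Real.sqrt E := Real.sqrt_pos.mpr hE
  set s := Real.sqrt E with hsdef
  have hsE : s * s = E := Real.mul_self_sqrt hE.le
  have h2 : Real.sqrt 2 ≤ 2 := by
    nlinarith [Real.sq_sqrt (by norm_num : (0:ℝ) ≤ 2), Real.sqrt_nonneg 2]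
  intro r
  induction r with
  | zero =>
    simp only [Nat.cast_zero, neg_zero, zpow_zero, one_mul]
    constructor
    · have h1 : ε / (4 * s) ≤ ε / (2 * s) := by
        apply div_le_div_of_nonneg_left hε.le (by positivity) (by linarith)
      nlinarith
    · have h1 : ε / 4 ≤ ε / 2 := by linarith
      nlinarith
  | succ r ih =>
    obtain ⟨iha, ihb⟩ := ih
    set p : ℝ := (2 : ℝ) ^ (-(r : ℤ)) with hp
    have hppos : 0 < p := by positivity
    have hpow : (2 : ℝ) ^ (-((r : ℕ) + 1 : ℕ) : ℤ) = p / 2 := by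
      push_cast
      rw [neg_add, zpow_add₀ (two_ne_zero), hp]
      norm_num
      ring
    rw [hpow]
    constructor
    · have step := ha r
      have hmono : a r + b r / s ≤ (ε / (2 * s) + p * s) + (ε / 2 + p * E) / s := by
        have : b r / s ≤ (ε / 2 + p * E) / s :=
          div_le_div_of_nonneg_right ihb hs.le |>.trans_eq rfl
        linarith
      have key : ε / (4 * s) + (1 / 4) * ((ε / (2 * s) + p * s) + (ε / 2 + p * E) / s)
          = ε / (2 * s) + p / 2 * s := by
        rw [← hsE]; field_simp; ring
      nlinarith [step, hmono]
    · have step := hb r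
      have key : ε / 4 + (1 / 4) * (s * (ε / (2 * s) + p * s) + (ε / 2 + p * E))
          = ε / 2 + p / 2 * E := by
        rw [← hsE]; field_simp; ring
      have hmono : s * a r + b r ≤ s * (ε / (2 * s) + p * s) + (ε / 2 + p * E) := by
        nlinarith
      nlinarith [step, hmono]
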